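/- arXiv:1105.2391 — 3 statements merged into one kernel-verified Lean document; each statement's English description precedes it below -/
import Mathlib

section
/- (Lemma: second matching bound.) Let c be a metric on V, let x be a feasible solution of the path-variant Held-Karp relaxation with respect to s and t, let H be a spanning tree of the complete graph on V with c(H) ≤ c(x) (e.g. a minimum spanning tree), and let T be the wrong-parity set of H. Then there exists a perfect matching M on T with c(M) ≤ c(x) − c(s,t). -/
open Finset

namespace TSPPath

noncomputable section
open scoped Classical

/-- Edge set of the complete graph on `Fin n`: all unordered pairs of distinct vertices. -/
def Edges (n : ℕ) : Finset (Sym2 (Fin n)) := Finset.univ.filter (fun e => ¬ e.IsDiag)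

/-- `cutSet n S` is `δ(S)`: the edges with exactly one endpoint in `S`. -/
def cutSet (n : ℕ) (S : Finset (Fin n)) : Finset (Sym2 (Fin n)) :=
  (Edges n).filter (fun e => ∃ u v : Fin n, e = s(u, v) ∧ u ∈ S ∧ v ∉ S)

/-- `inSet n S` is `E(S)`: the edges with both endpoints in `S`. -/
def inSet (n : ℕ) (S : Finset (Fin n)) : Finset (Sym2 (Fin n)) :=
  (Edges n).filter (fun e => ∀ v ∈ e, v ∈ S)

/-- Degree of a vertex in an edge set. -/
def deg (n : ℕ) (H : Finset (Sym2 (Fin n))) (v : Fin n) : ℕ :=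
  (H.filter (fun e => v ∈ e)).card

/-- Degree of a vertex in an edge multiset (counting multiplicity). -/
def mdeg (n : ℕ) (L : Multiset (Sym2 (Fin n))) (v : Fin n) : ℕ :=
  (L.filter (fun e => v ∈ e)).card

/-- Feasibility for the path-variant Held–Karp relaxation with endpoints `s, t`. -/
def HKPathFeasible (n : ℕ) (s t : Fin n) (x : Sym2 (Fin n) → ℝ) : Prop :=
  (∀ e, 0 ≤ x e) ∧
  (∑ e ∈ cutSet n {s}, x e = 1) ∧
  (∑ e ∈ cutSet n {t}, x e = 1) ∧
  (∀ v : Fin n, v ≠ s → v ≠ t → ∑ e ∈ cutSet n {v}, x e = 2) ∧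
  (∀ S : Finset (Fin n), S.Nonempty → S ≠ Finset.univ →
      ((s ∈ S ∧ t ∉ S) ∨ (s ∉ S ∧ t ∈ S)) → 1 ≤ ∑ e ∈ cutSet n S, x e) ∧
  (∀ S : Finset (Fin n), S.Nonempty → S ≠ Finset.univ →
      ¬((s ∈ S ∧ t ∉ S) ∨ (s ∉ S ∧ t ∈ S)) → 2 ≤ ∑ e ∈ cutSet n S, x e)

/-- `c` is a metric: nonnegative, symmetric, vanishing on the diagonal, triangle inequality. -/
def IsMetric (n : ℕ) (c : Fin n → Fin n → ℝ) : Prop :=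
  (∀ u v, 0 ≤ c u v) ∧ (∀ u v, c u v = c v u) ∧ (∀ u, c u u = 0) ∧
  (∀ u v w, c u w ≤ c u v + c v w)

/-- Cost of an unordered edge (defined by symmetrization, which agrees with `c u v`
whenever `c` is symmetric). -/
def ecost (n : ℕ) (c : Fin n → Fin n → ℝ) (e : Sym2 (Fin n)) : ℝ :=
  Sym2.lift ⟨fun u v => (c u v + c v u) / 2, by intro u v; ring⟩ e

/-- `c(x) = ∑_{e ∈ E} x_e c(e)`. -/
def xcost (n : ℕ) (c : Fin n → Fin n → ℝ) (x : Sym2 (Fin n) → ℝ) : ℝ :=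
  ∑ e ∈ Edges n, x e * ecost n c e

/-- `c(F) = ∑_{e ∈ F} c(e)` for an edge set `F`. -/
def fcost (n : ℕ) (c : Fin n → Fin n → ℝ) (F : Finset (Sym2 (Fin n))) : ℝ :=
  ∑ e ∈ F, ecost n c e

/-- `H` is (the edge set of) a spanning tree of the complete graph on `Fin n`. -/
def IsSpanningTree (n : ℕ) (H : Finset (Sym2 (Fin n))) : Prop :=
  H ⊆ Edges n ∧ (SimpleGraph.fromEdgeSet (H : Set (Sym2 (Fin n)))).Connected ∧
    H.card = n - 1

/-- The wrong-parity set of an edge set `H`: internal vertices of odd degree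
together with the endpoints of even degree. -/
def wrongParity (n : ℕ) (s t : Fin n) (H : Finset (Sym2 (Fin n))) : Finset (Fin n) :=
  Finset.univ.filter (fun v =>
    if v = s ∨ v = t then Even (deg n H v) else Odd (deg n H v))

/-- `M` is a perfect matching on the vertex set `T`: vertex-disjoint edges covering
exactly the vertices of `T`. -/
def IsPerfectMatchingOn (n : ℕ) (T : Finset (Fin n)) (M : Finset (Sym2 (Fin n))) : Prop :=
  M ⊆ Edges n ∧ (∀ v ∈ T, deg n M v = 1) ∧ (∀ v : Fin n, v ∉ T → deg n M v = 0)

/-- `J` is a `T`-join: exactly the vertices of `T` have odd degree in `J`. -/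
def IsTJoin (n : ℕ) (T : Finset (Fin n)) (J : Finset (Sym2 (Fin n))) : Prop :=
  J ⊆ Edges n ∧ ∀ v : Fin n, Odd (deg n J v) ↔ v ∈ T

/-- There is a Hamiltonian path from `s` to `t` in the complete graph on `Fin n`
of cost (w.r.t. the metric `c`) at most `B`. -/
def ExistsHamPath (n : ℕ) (s t : Fin n) (c : Fin n → Fin n → ℝ) (B : ℝ) : Prop :=
  ∃ p : (⊤ : SimpleGraph (Fin n)).Walk s t,
    p.IsHamiltonian ∧ (p.edges.map (ecost n c)).sum ≤ B

/-- Connectivity of the multigraph `(V, L)` (equivalently, of its support graph,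
which must span all of `Fin n`). -/
def MConnected (n : ℕ) (L : Multiset (Sym2 (Fin n))) : Prop :=
  (SimpleGraph.fromEdgeSet {e | e ∈ L}).Connected

/-- The multiset of edges traversed by the walk given by a vertex list `w`. -/
def walkEdges (n : ℕ) (w : List (Fin n)) : Multiset (Sym2 (Fin n)) :=
  ((w.zip w.tail).map (fun p => s(p.1, p.2)) : List (Sym2 (Fin n)))

/-- `w` is an Eulerian trail from `s` to `t` of the edge multiset `L`: a walk from `s`
to `t` whose multiset of traversed edges is exactly `L` (with multiplicity). -/
def IsEulerianTrail (n : ℕ) (L : Multiset (Sym2 (Fin n))) (s t : Fin n)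
    (w : List (Fin n)) : Prop :=
  w.head? = some s ∧ w.getLast? = some t ∧ walkEdges n w = L

/- AUX START -/
lemma mem_Edges {n : ℕ} {e : Sym2 (Fin n)} : e ∈ Edges n ↔ ¬ e.IsDiag := by
  simp [Edges]

lemma ecost_mk {n : ℕ} {c : Fin n → Fin n → ℝ} (hc : IsMetric n c) (u v : Fin n) :
    ecost n c s(u, v) = c u v := by
  have h := hc.2.1 v u
  simp only [ecost, Sym2.lift_mk]
  rw [h]; ring

lemma ecost_nonneg {n : ℕ} {c : Fin n → Fin n → ℝ} (hc : IsMetric n c) (e : Sym2 (Fin n)) :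
    0 ≤ ecost n c e := by
  induction e using Sym2.ind with
  | _ u v => rw [ecost_mk hc]; exact hc.1 u v

lemma walk_cost_le {n : ℕ} {c : Fin n → Fin n → ℝ} (hc : IsMetric n c)
    {G : SimpleGraph (Fin n)} : ∀ {a b : Fin n} (p : G.Walk a b),
    c a b ≤ (p.edges.map (ecost n c)).sum := by
  intro a b p
  induction p with
  | nil => simp [hc.2.2.1]
  | @cons u v w h q ih =>
    simp only [SimpleGraph.Walk.edges_cons, List.map_cons, List.sum_cons, ecost_mk hc]
    calc c u w ≤ c u v + c v w := hc.2.2.2 u v w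
    _ ≤ c u v + (q.edges.map (ecost n c)).sum := by linarith

lemma edgeSet_of_subset {n : ℕ} {F : Finset (Sym2 (Fin n))} (hF : F ⊆ Edges n) :
    (SimpleGraph.fromEdgeSet (F : Set (Sym2 (Fin n)))).edgeSet = ↑F := by
  rw [SimpleGraph.edgeSet_fromEdgeSet]
  ext e
  simp only [Set.mem_diff, Set.mem_setOf_eq, Finset.mem_coe]
  exact ⟨fun h => h.1, fun h => ⟨h, by have := hF h; rw [mem_Edges] at this; exact this⟩⟩

lemma degree_fromEdgeSet {n : ℕ} {F : Finset (Sym2 (Fin n))} (hF : F ⊆ Edges n) (v : Fin n) :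
    (SimpleGraph.fromEdgeSet (F : Set (Sym2 (Fin n)))).degree v = deg n F v := by
  classical
  rw [← SimpleGraph.card_incidenceFinset_eq_degree, SimpleGraph.incidenceFinset_eq_filter]
  have hE : (SimpleGraph.fromEdgeSet (F : Set (Sym2 (Fin n)))).edgeFinset = F := by
    simp [SimpleGraph.edgeFinset, edgeSet_of_subset hF]
  rw [hE]
  unfold deg
  congr 1

lemma deg_sdiff_add {n : ℕ} {P J : Finset (Sym2 (Fin n))} (h : P ⊆ J) (v : Fin n) :
    deg n (J \ P) v + deg n P v = deg n J v := by
  unfold deg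
  rw [← Finset.card_union_of_disjoint
    (Finset.disjoint_filter_filter Finset.sdiff_disjoint), ← Finset.filter_union,
    Finset.sdiff_union_of_subset h]

lemma deg_toFinset {n : ℕ} {l : List (Sym2 (Fin n))} (hl : l.Nodup) (u : Fin n) :
    deg n l.toFinset u = l.countP (fun e => decide (u ∈ e)) := by
  unfold deg
  have h1 : Finset.filter (fun e => u ∈ e) l.toFinset
      = (l.filter (fun e => decide (u ∈ e))).toFinset := by
    ext e; simp
  rw [h1, List.card_toFinset, List.Nodup.dedup (hl.filter _),
    List.countP_eq_length_filter]

/- AUX END -/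
lemma exists_odd_partner {n : ℕ} {J : Finset (Sym2 (Fin n))} (hJ : J ⊆ Edges n) {v : Fin n}
    (hv : Odd (deg n J v)) :
    ∃ w, w ≠ v ∧ Odd (deg n J w) ∧
      (SimpleGraph.fromEdgeSet (J : Set (Sym2 (Fin n)))).Reachable v w := by
  classical
  set G := SimpleGraph.fromEdgeSet (J : Set (Sym2 (Fin n))) with hG
  set C : Finset (Fin n) := Finset.univ.filter (fun u => G.Reachable v u) with hC
  set JC : Finset (Sym2 (Fin n)) := J.filter (fun e => ∀ u ∈ e, u ∈ C) with hJC
  have hJCsub : JC ⊆ J := Finset.filter_subset _ _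
  have hJCE : JC ⊆ Edges n := hJCsub.trans hJ
  have key : ∀ u ∈ C, ∀ e ∈ J, u ∈ e → e ∈ JC := by
    intro u hu e he hue
    induction e using Sym2.ind with
    | _ a b =>
      have hab : a ≠ b := by
        have h2 := hJ he
        rw [mem_Edges] at h2
        simpa [Sym2.isDiag_iff_proj_eq] using h2
      have hadj : G.Adj a b := by
        rw [hG, SimpleGraph.fromEdgeSet_adj]
        exact ⟨he, hab⟩
      have huC : G.Reachable v u := (Finset.mem_filter.mp hu).2
      have hreach : ∀ z ∈ s(a,b), G.Reachable v z := by
        intro z hz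
        rcases Sym2.mem_iff.mp hz with rfl | rfl <;>
          rcases Sym2.mem_iff.mp hue with rfl | rfl
        · exact huC
        · exact huC.trans hadj.symm.reachable
        · exact huC.trans hadj.reachable
        · exact huC
      rw [hJC, Finset.mem_filter]
      refine ⟨he, fun z hz => Finset.mem_filter.mpr ⟨Finset.mem_univ _, hreach z hz⟩⟩
  have hdegC : ∀ u ∈ C, deg n JC u = deg n J u := by
    intro u hu
    unfold deg
    congr 1
    ext e
    simp only [Finset.mem_filter]
    constructor
    · rintro ⟨heJC, hue⟩; exact ⟨hJCsub heJC, hue⟩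
    · rintro ⟨heJ, hue⟩; exact ⟨key u hu e heJ hue, hue⟩
  have hvC : v ∈ C := Finset.mem_filter.mpr ⟨Finset.mem_univ _, SimpleGraph.Reachable.refl v⟩
  have heven := SimpleGraph.even_card_odd_degree_vertices
    (SimpleGraph.fromEdgeSet (JC : Set (Sym2 (Fin n))))
  have hAeq : (Finset.univ.filter
        (fun u => Odd ((SimpleGraph.fromEdgeSet (JC : Set (Sym2 (Fin n)))).degree u)))
      = Finset.univ.filter (fun u => Odd (deg n JC u)) := by
    apply Finset.filter_congr
    intro u _
    rw [degree_fromEdgeSet hJCE]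
  set A := Finset.univ.filter (fun u => Odd (deg n JC u)) with hA
  have hevenA : Even A.card := by
    rw [← hAeq]
    convert heven using 2
  have hvA : v ∈ A := by
    rw [hA, Finset.mem_filter]
    exact ⟨Finset.mem_univ _, by rwa [hdegC v hvC]⟩
  have hcard : 1 < A.card := by
    rcases hevenA with ⟨k, hk⟩
    have h1 : 0 < A.card := Finset.card_pos.mpr ⟨v, hvA⟩
    omega
  obtain ⟨w, hwA, hwv⟩ := Finset.exists_mem_ne hcard v
  have hwodd : Odd (deg n JC w) := (Finset.mem_filter.mp hwA).2
  have hwC : w ∈ C := by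
    have hpos : 0 < deg n JC w := by
      rcases hwodd with ⟨k, hk⟩; omega
    obtain ⟨e, he⟩ := Finset.card_pos.mp hpos
    rw [Finset.mem_filter] at he
    rcases Finset.mem_filter.mp he.1 with ⟨heJC, hue⟩
    exact hue w he.2
  refine ⟨w, hwv, by rwa [hdegC w hwC] at hwodd, (Finset.mem_filter.mp hwC).2⟩
lemma tjoin_matching {n : ℕ} {c : Fin n → Fin n → ℝ} (hc : IsMetric n c) :
    ∀ (N : ℕ) (J : Finset (Sym2 (Fin n))), J.card ≤ N → J ⊆ Edges n →
    ∃ M : Finset (Sym2 (Fin n)), M ⊆ Edges n ∧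
      (∀ u, deg n M u = if Odd (deg n J u) then 1 else 0) ∧
      fcost n c M ≤ fcost n c J := by
  intro N
  induction N with
  | zero =>
    intro J hcard hJ
    have hJe : J = ∅ := Finset.card_eq_zero.mp (Nat.le_zero.mp hcard)
    subst hJe
    refine ⟨∅, by simp, fun u => by simp [deg], by simp [fcost]⟩
  | succ N ih =>
    intro J hcard hJ
    by_cases hodd : ∃ v, Odd (deg n J v)
    · obtain ⟨v, hv⟩ := hodd
      obtain ⟨w, hwv, hw, hreach⟩ := exists_odd_partner hJ hv
      obtain ⟨q⟩ := hreach
      set p : (SimpleGraph.fromEdgeSet (J : Set (Sym2 (Fin n)))).Walk v w := q.toPath.1 with hp_def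
      have hp : p.IsPath := q.toPath.2
      have hnodup : p.edges.Nodup := hp.isTrail.edges_nodup
      set P : Finset (Sym2 (Fin n)) := p.edges.toFinset with hP_def
      have hPJ : P ⊆ J := by
        intro e he
        rw [hP_def, List.mem_toFinset] at he
        have h1 := p.edges_subset_edgeSet he
        rw [edgeSet_of_subset hJ] at h1
        exact h1
      have hPne : P.Nonempty := by
        have hlen : p.edges ≠ [] := by
          intro hnil
          apply hwv
          have : p.length = 0 := by rw [← SimpleGraph.Walk.length_edges, hnil]; rfl
          exact (SimpleGraph.Walk.eq_of_length_eq_zero this).symm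
        obtain ⟨e, he⟩ := List.exists_mem_of_ne_nil _ hlen
        exact ⟨e, by rw [hP_def, List.mem_toFinset]; exact he⟩
      have hJ'card : (J \ P).card ≤ N := by
        have h1 : (J \ P).card = J.card - P.card := Finset.card_sdiff_of_subset hPJ
        have h2 : 0 < P.card := Finset.card_pos.mpr hPne
        omega
      obtain ⟨M', hM'E, hM'deg, hM'cost⟩ := ih (J \ P) hJ'card ((Finset.sdiff_subset).trans hJ)
      -- parity of P degrees
      have hPdeg : ∀ u, Odd (deg n P u) ↔ (u = v ∨ u = w) := by
        intro u
        rw [hP_def, deg_toFinset hnodup, ← Nat.not_even_iff_odd]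
        have := hp.isTrail.even_countP_edges_iff u
        constructor
        · intro h
          by_contra hcon
          push_neg at hcon
          exact h (this.mpr (fun _ => ⟨hcon.1, hcon.2⟩))
        · intro h h2
          rcases (this.mp h2) (Ne.symm hwv) with ⟨h3, h4⟩
          rcases h with rfl | rfl
          · exact h3 rfl
          · exact h4 rfl
      have hsplit : ∀ u, deg n (J \ P) u + deg n P u = deg n J u := deg_sdiff_add hPJ
      -- v and w have even degree in J \ P
      have hvJ' : ¬ Odd (deg n (J \ P) v) := by
        have h1 := hsplit v
        have h2 : Odd (deg n P v) := (hPdeg v).mpr (Or.inl rfl)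
        rw [Nat.odd_iff] at h2 hv ⊢
        omega
      have hwJ' : ¬ Odd (deg n (J \ P) w) := by
        have h1 := hsplit w
        have h2 : Odd (deg n P w) := (hPdeg w).mpr (Or.inr rfl)
        rw [Nat.odd_iff] at h2 hw ⊢
        omega
      have hnm : s(v, w) ∉ M' := by
        intro hmem
        have h0 : deg n M' v = 0 := by rw [hM'deg v, if_neg hvJ']
        have : 0 < deg n M' v := Finset.card_pos.mpr
          ⟨s(v, w), Finset.mem_filter.mpr ⟨hmem, by simp⟩⟩
        omega
      refine ⟨insert s(v, w) M', ?_, ?_, ?_⟩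
      · refine Finset.insert_subset ?_ hM'E
        rw [mem_Edges, Sym2.isDiag_iff_proj_eq]
        exact fun h => hwv h.symm
      · intro u
        have hdM : deg n (insert s(v, w) M') u
            = deg n M' u + (if u ∈ s(v, w) then 1 else 0) := by
          unfold deg
          rw [Finset.filter_insert]
          by_cases h : u ∈ s(v, w)
          · rw [if_pos h, if_pos h,
              Finset.card_insert_of_notMem (fun hmem => hnm (Finset.mem_of_mem_filter _ hmem))]
          · rw [if_neg h, if_neg h, Nat.add_zero]
        rw [hdM, hM'deg u]
        by_cases h : u = v ∨ u = w
        · have hmem : u ∈ s(v, w) := by rcases h with rfl | rfl <;> simp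
          rw [if_pos hmem]
          rcases h with rfl | rfl
          · rw [if_neg hvJ', if_pos hv]
          · rw [if_neg hwJ', if_pos hw]
        · have hmem : u ∉ s(v, w) := by
            rw [Sym2.mem_iff]; exact h
          rw [if_neg hmem, Nat.add_zero]
          have h1 := hsplit u
          have h2 : ¬ Odd (deg n P u) := fun hcon => h ((hPdeg u).mp hcon)
          have h3 : Odd (deg n (J \ P) u) ↔ Odd (deg n J u) := by
            rw [Nat.odd_iff, Nat.odd_iff] at *
            omega
          by_cases h4 : Odd (deg n J u)
          · rw [if_pos h4, if_pos (h3.mpr h4)]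
          · rw [if_neg h4, if_neg (fun hcon => h4 (h3.mp hcon))]
      · have hsum : fcost n c (insert s(v, w) M') = ecost n c s(v, w) + fcost n c M' := by
          unfold fcost; rw [Finset.sum_insert hnm]
        have hPcost : c v w ≤ fcost n c P := by
          have h1 := walk_cost_le hc p
          have h2 : (p.edges.map (ecost n c)).sum = fcost n c P := by
            rw [hP_def]
            unfold fcost
            rw [List.sum_toFinset _ hnodup]
          linarith [h1, h2.le]
        have hJsplit : fcost n c (J \ P) + fcost n c P = fcost n c J := by
          unfold fcost; exact Finset.sum_sdiff hPJ
        rw [hsum, ecost_mk hc]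
        linarith
    · push_neg at hodd
      refine ⟨∅, by simp, fun u => by rw [if_neg (hodd u)]; simp [deg], ?_⟩
      unfold fcost
      simp only [Finset.sum_empty]
      exact Finset.sum_nonneg (fun e _ => ecost_nonneg hc e)

/-- (Second matching bound.) For a metric `c`, a feasible Held–Karp
solution `x`, and a spanning tree `H` with `c(H) ≤ c(x)` and wrong-parity set `T`, there
is a perfect matching `M` on `T` with `c(M) ≤ c(x) − c(s,t)`. -/
theorem second_matching_bound (n : ℕ) (hn : 2 ≤ n) (s t : Fin n) (hst : s ≠ t)
    (c : Fin n → Fin n → ℝ) (hc : IsMetric n c)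
    (x : Sym2 (Fin n) → ℝ) (hx : HKPathFeasible n s t x)
    (H : Finset (Sym2 (Fin n))) (hH : IsSpanningTree n H)
    (hHc : fcost n c H ≤ xcost n c x) :
    ∃ M : Finset (Sym2 (Fin n)), IsPerfectMatchingOn n (wrongParity n s t H) M ∧
      fcost n c M ≤ xcost n c x - c s t := by
  obtain ⟨hHE, hHconn, hHcard⟩ := hH
  obtain ⟨q⟩ := hHconn.preconnected s t
  set p : (SimpleGraph.fromEdgeSet (H : Set (Sym2 (Fin n)))).Walk s t := q.toPath.1 with hp_def
  have hp : p.IsPath := q.toPath.2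
  have hnodup : p.edges.Nodup := hp.isTrail.edges_nodup
  set P : Finset (Sym2 (Fin n)) := p.edges.toFinset with hP_def
  have hPH : P ⊆ H := by
    intro e he
    rw [hP_def, List.mem_toFinset] at he
    have h1 := p.edges_subset_edgeSet he
    rw [edgeSet_of_subset hHE] at h1
    exact h1
  set J : Finset (Sym2 (Fin n)) := H \ P with hJ_def
  have hJE : J ⊆ Edges n := (Finset.sdiff_subset).trans hHE
  obtain ⟨M, hME, hMdeg, hMcost⟩ := tjoin_matching hc J.card J le_rfl hJE
  -- parity: Odd (deg n J u) ↔ u ∈ wrongParity n s t H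
  have hPdeg : ∀ u, Odd (deg n P u) ↔ (u = s ∨ u = t) := by
    intro u
    rw [hP_def, deg_toFinset hnodup, ← Nat.not_even_iff_odd]
    have h0 := hp.isTrail.even_countP_edges_iff u
    constructor
    · intro h
      by_contra hcon
      push_neg at hcon
      exact h (h0.mpr (fun _ => ⟨hcon.1, hcon.2⟩))
    · intro h h2
      rcases (h0.mp h2) hst with ⟨h3, h4⟩
      rcases h with rfl | rfl
      · exact h3 rfl
      · exact h4 rfl
  have hsplit : ∀ u, deg n J u + deg n P u = deg n H u := deg_sdiff_add hPH
  have hpar : ∀ u, Odd (deg n J u) ↔ u ∈ wrongParity n s t H := by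
    intro u
    rw [wrongParity, Finset.mem_filter]
    simp only [Finset.mem_univ, true_and]
    have h1 := hsplit u
    by_cases h : u = s ∨ u = t
    · rw [if_pos h]
      have h2 : Odd (deg n P u) := (hPdeg u).mpr h
      rw [Nat.odd_iff] at h2 ⊢
      rw [Nat.even_iff]
      omega
    · rw [if_neg h]
      have h2 : ¬ Odd (deg n P u) := fun hcon => h ((hPdeg u).mp hcon)
      rw [Nat.odd_iff] at h2 ⊢
      rw [Nat.odd_iff]
      omega
  refine ⟨M, ⟨hME, ?_, ?_⟩, ?_⟩
  · intro u hu
    rw [hMdeg u, if_pos ((hpar u).mpr hu)]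
  · intro u hu
    rw [hMdeg u, if_neg (fun hcon => hu ((hpar u).mp hcon))]
  · have hPcost : c s t ≤ fcost n c P := by
      have h1 := walk_cost_le hc p
      have h2 : (p.edges.map (ecost n c)).sum = fcost n c P := by
        rw [hP_def]; unfold fcost; rw [List.sum_toFinset _ hnodup]
      linarith [h1, h2.le]
    have hJsplit : fcost n c J + fcost n c P = fcost n c H := by
      unfold fcost; exact Finset.sum_sdiff hPH
    linarith


end
end TSPPath
end

section
/- (Path Held-Karp polytope lies in the spanning tree polytope.) Every feasible solution x of the path-variant Held-Karp relaxation with respect to s and t satisfies x(E) = n − 1 and x(E(S)) ≤ |S| − 1 for every nonempty subset S ⊆ V; that is, x lies in the spanning tree polytope of the complete graph on V. -/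
open Finset

namespace TSPPath

noncomputable section
open scoped Classical

lemma edges_ne (n : ℕ) {a b : Fin n} (he : s(a,b) ∈ Edges n) : a ≠ b := by
  simpa [Edges, Sym2.mk_isDiag_iff] using he

lemma cutSet_singleton_eq (n : ℕ) (v : Fin n) :
    cutSet n {v} = (Edges n).filter (fun e => v ∈ e) := by
  ext e
  simp only [cutSet, Finset.mem_filter, Finset.mem_singleton]
  constructor
  · rintro ⟨he, u, w, rfl, hu, hw⟩
    subst hu
    exact ⟨he, by simp⟩
  · rintro ⟨he, hv⟩
    obtain ⟨w, rfl⟩ := Sym2.mem_iff_exists.mp hv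
    have hvw : v ≠ w := edges_ne n he
    exact ⟨he, v, w, rfl, rfl, fun h => hvw h.symm⟩

lemma inner_count (n : ℕ) (S : Finset (Fin n)) (x : Sym2 (Fin n) → ℝ) :
    ∑ v ∈ S, ∑ e ∈ cutSet n {v}, x e
      = 2 * ∑ e ∈ inSet n S, x e + ∑ e ∈ cutSet n S, x e := by
  have h1 : ∀ v : Fin n, ∑ e ∈ cutSet n {v}, x e
      = ∑ e ∈ Edges n, if v ∈ e then x e else 0 := by
    intro v; rw [cutSet_singleton_eq, Finset.sum_filter]
  simp only [h1]
  rw [Finset.sum_comm]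
  have h2 : ∀ e ∈ Edges n, (∑ v ∈ S, if v ∈ e then x e else 0)
      = (if e ∈ inSet n S then 2 * x e else 0) + (if e ∈ cutSet n S then x e else 0) := by
    intro e he
    induction e using Sym2.ind with
    | _ a b =>
      have hab : a ≠ b := edges_ne n he
      have hin : s(a,b) ∈ inSet n S ↔ a ∈ S ∧ b ∈ S := by
        simp only [inSet, Finset.mem_filter]
        constructor
        · rintro ⟨-, h⟩; exact ⟨h a (by simp), h b (by simp)⟩
        · rintro ⟨ha, hb⟩
          refine ⟨he, fun v hv => ?_⟩
          rcases Sym2.mem_iff.mp hv with rfl | rfl <;> assumption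
      have hcut : s(a,b) ∈ cutSet n S ↔ ((a ∈ S ∧ b ∉ S) ∨ (b ∈ S ∧ a ∉ S)) := by
        constructor
        · intro h
          simp only [cutSet, Finset.mem_filter] at h
          obtain ⟨-, u, w, huv, hu, hw⟩ := h
          rw [Sym2.eq_iff] at huv
          rcases huv with ⟨rfl, rfl⟩ | ⟨rfl, rfl⟩
          · exact Or.inl ⟨hu, hw⟩
          · exact Or.inr ⟨hu, hw⟩
        · intro h
          simp only [cutSet, Finset.mem_filter]
          rcases h with ⟨ha, hb⟩ | ⟨hb, ha⟩
          · exact ⟨he, a, b, rfl, ha, hb⟩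
          · exact ⟨he, b, a, Sym2.eq_swap, hb, ha⟩
      have hsum : (∑ v ∈ S, if v ∈ s(a,b) then x s(a,b) else 0)
          = (if a ∈ S then x s(a,b) else 0) + (if b ∈ S then x s(a,b) else 0) := by
        have hpt : ∀ v ∈ S, (if v ∈ s(a,b) then x s(a,b) else 0)
            = (if v = a then x s(a,b) else 0) + (if v = b then x s(a,b) else 0) := by
          intro v _
          rcases eq_or_ne v a with rfl | hva <;> rcases eq_or_ne v b with rfl | hvb <;>
            simp_all [Sym2.mem_iff]
        rw [Finset.sum_congr rfl hpt, Finset.sum_add_distrib,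
          Finset.sum_ite_eq' S a, Finset.sum_ite_eq' S b]
      rw [hsum]
      by_cases ha : a ∈ S <;> by_cases hb : b ∈ S <;>
        simp [ha, hb, hin, hcut] <;> ring
  rw [Finset.sum_congr rfl h2, Finset.sum_add_distrib]
  have hsubI : inSet n S ⊆ Edges n := by
    intro e h
    simp only [inSet, Finset.mem_filter] at h
    exact h.1
  have hsubC : cutSet n S ⊆ Edges n := by
    intro e h
    simp only [cutSet, Finset.mem_filter] at h
    exact h.1
  congr 1
  · rw [← Finset.sum_filter]
    have hfil : (Edges n).filter (fun e => e ∈ inSet n S) = inSet n S := by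
      ext e
      constructor
      · intro h; exact (Finset.mem_filter.mp h).2
      · intro h; exact Finset.mem_filter.mpr ⟨hsubI h, h⟩
    rw [hfil, Finset.mul_sum]
  · rw [← Finset.sum_filter]
    congr 1
    ext e
    constructor
    · intro h; exact (Finset.mem_filter.mp h).2
    · intro h; exact Finset.mem_filter.mpr ⟨hsubC h, h⟩

lemma deg_sum (n : ℕ) (s t : Fin n) (hst : s ≠ t) (x : Sym2 (Fin n) → ℝ)
    (hx : HKPathFeasible n s t x) (S : Finset (Fin n)) :
    ∑ v ∈ S, ∑ e ∈ cutSet n {v}, x e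
      = 2 * S.card - (if s ∈ S then 1 else 0) - (if t ∈ S then 1 else 0) := by
  obtain ⟨_, hs, ht, hdeg, _, _⟩ := hx
  have hpt : ∀ v ∈ S, (∑ e ∈ cutSet n {v}, x e)
      = 2 - (if v = s then (1:ℝ) else 0) - (if v = t then 1 else 0) := by
    intro v _
    rcases eq_or_ne v s with rfl | hvs
    · rw [hs, if_pos rfl, if_neg hst]; norm_num
    rcases eq_or_ne v t with rfl | hvt
    · rw [ht, if_neg hvs, if_pos rfl]; norm_num
    · rw [hdeg v hvs hvt, if_neg hvs, if_neg hvt]; norm_num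
  rw [Finset.sum_congr rfl hpt]
  rw [Finset.sum_sub_distrib, Finset.sum_sub_distrib, Finset.sum_const,
    Finset.sum_ite_eq' S s, Finset.sum_ite_eq' S t, nsmul_eq_mul, mul_comm]

lemma cutSet_univ (n : ℕ) : cutSet n (Finset.univ : Finset (Fin n)) = ∅ := by
  simp [cutSet]

lemma inSet_univ (n : ℕ) : inSet n (Finset.univ : Finset (Fin n)) = Edges n := by
  simp [inSet]

/-- (The path Held–Karp polytope lies in the spanning tree polytope.)
Every feasible solution `x` satisfies `x(E) = n − 1` and `x(E(S)) ≤ |S| − 1` for every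
nonempty `S ⊆ V`. -/
theorem hk_in_spanning_tree_polytope (n : ℕ) (hn : 2 ≤ n) (s t : Fin n) (hst : s ≠ t)
    (x : Sym2 (Fin n) → ℝ) (hx : HKPathFeasible n s t x) :
    (∑ e ∈ Edges n, x e = (n : ℝ) - 1) ∧
    ∀ S : Finset (Fin n), S.Nonempty → ∑ e ∈ inSet n S, x e ≤ (S.card : ℝ) - 1 := by
  have key : ∀ S : Finset (Fin n),
      2 * ∑ e ∈ inSet n S, x e + ∑ e ∈ cutSet n S, x e
        = 2 * S.card - (if s ∈ S then 1 else 0) - (if t ∈ S then 1 else 0) := by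
    intro S; rw [← inner_count, deg_sum n s t hst x hx]
  have hE : ∑ e ∈ Edges n, x e = (n : ℝ) - 1 := by
    have h := key Finset.univ
    rw [cutSet_univ, inSet_univ] at h
    simp only [Finset.mem_univ, if_true, Finset.sum_empty, add_zero, Finset.card_univ,
      Fintype.card_fin] at h
    linarith
  refine ⟨hE, fun S hS => ?_⟩
  by_cases hSu : S = Finset.univ
  · subst hSu
    rw [inSet_univ, hE, Finset.card_univ, Fintype.card_fin]
  · have hk := key S
    have hnn : (0:ℝ) ≤ ∑ e ∈ cutSet n S, x e :=
      Finset.sum_nonneg fun e _ => hx.1 e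
    by_cases hsS : s ∈ S <;> by_cases htS : t ∈ S
    · rw [if_pos hsS, if_pos htS] at hk; linarith
    · have hc := hx.2.2.2.2.1 S hS hSu (Or.inl ⟨hsS, htS⟩)
      rw [if_pos hsS, if_neg htS] at hk; linarith
    · have hc := hx.2.2.2.2.1 S hS hSu (Or.inr ⟨hsS, htS⟩)
      rw [if_neg hsS, if_pos htS] at hk; linarith
    · have hc := hx.2.2.2.2.2 S hS hSu (by tauto)
      rw [if_neg hsS, if_neg htS] at hk; linarith


end
end TSPPath
end

section
/- (Tree minus its s–t path is a T-join.) Let H be a spanning tree of the complete graph on V, and let P be the unique path in H between s and t. Let T be the wrong-parity set of H. Then in the edge set H \ P (the edges of H not on P), a vertex of V has odd degree if and only if it belongs to T; in other words, H \ P is a T-join. -/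
open Finset

namespace TSPPath

noncomputable section
open scoped Classical

/-- (Tree minus its `s`–`t` path is a `T`-join.) If `H` is a spanning
tree and `P` is the path in `H` between `s` and `t`, then `H \ P` is a `T`-join for the
wrong-parity set `T` of `H`. -/
theorem tree_minus_path_is_Tjoin (n : ℕ) (hn : 2 ≤ n) (s t : Fin n) (hst : s ≠ t)
    (H : Finset (Sym2 (Fin n))) (hH : IsSpanningTree n H)
    (P : (SimpleGraph.fromEdgeSet (H : Set (Sym2 (Fin n)))).Walk s t) (hP : P.IsPath) :
    IsTJoin n (wrongParity n s t H) (H \ P.edges.toFinset) := by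
  set F := P.edges.toFinset with hF
  have hFsub : F ⊆ H := by
    intro e he
    rw [hF, List.mem_toFinset] at he
    have := P.edges_subset_edgeSet he
    rw [SimpleGraph.edgeSet_fromEdgeSet] at this
    exact this.1
  have hsplit : ∀ v, deg n H v = deg n (H \ F) v + deg n F v := by
    intro v
    unfold deg
    have hsd : (H \ F).filter (fun e => v ∈ e)
        = H.filter (fun e => v ∈ e) \ F.filter (fun e => v ∈ e) := by
      ext e; simp only [Finset.mem_filter, Finset.mem_sdiff]; tauto
    rw [hsd, Finset.card_sdiff_of_subset (Finset.filter_subset_filter _ hFsub)]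
    have hle : (F.filter (fun e => v ∈ e)).card ≤ (H.filter (fun e => v ∈ e)).card :=
      Finset.card_le_card (Finset.filter_subset_filter _ hFsub)
    omega
  have hdegF : ∀ v, deg n F v = P.edges.countP (fun e => v ∈ e) := by
    intro v
    unfold deg
    have h1 : P.edges.toFinset.filter (fun e => v ∈ e)
        = (P.edges.filter (fun e => v ∈ e)).toFinset := by
      ext e; simp
    rw [hF, h1, List.toFinset_card_of_nodup (hP.isTrail.edges_nodup.filter _)]
    simp [List.countP_eq_length_filter]
  constructor
  · intro e he; exact hH.1 (Finset.sdiff_subset he)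
  · intro v
    have hparF := hP.isTrail.even_countP_edges_iff v
    rw [← hdegF] at hparF
    have hiff : Even (deg n F v) ↔ ¬ (v = s ∨ v = t) := by
      rw [hparF]
      constructor
      · intro h hv
        obtain ⟨h1, h2⟩ := h hst
        rcases hv with rfl | rfl
        · exact h1 rfl
        · exact h2 rfl
      · intro h _; exact ⟨fun hv => h (Or.inl hv), fun hv => h (Or.inr hv)⟩
    rw [wrongParity, Finset.mem_filter]
    simp only [Finset.mem_univ, true_and]
    have hs := hsplit v
    by_cases hv : v = s ∨ v = t
    · rw [if_pos hv]
      have hodd : Odd (deg n F v) := Nat.not_even_iff_odd.mp (fun h => (hiff.mp h) hv)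
      rw [Nat.odd_iff, Nat.even_iff]
      rw [Nat.odd_iff] at hodd
      omega
    · rw [if_neg hv]
      have heven : Even (deg n F v) := hiff.mpr hv
      rw [Nat.odd_iff, Nat.odd_iff]
      rw [Nat.even_iff] at heven
      omega


end
end TSPPath
end
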